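/- Suppose a function d : V × V → [0,∞) on a finite-dimensional vector space satisfies the reversed triangle inequality d(x,z) ≥ d(x,y) + d(y,z) whenever z − y, y − x ∈ 𝔗, and 𝔩(v) := lim_{n→∞} d(x, x+nv)/n exists for all v ∈ 𝔗, independently of x, with the convergence uniform on compact subsets of the interior of 𝔗. Then 𝔩 is superadditive on 𝔗: 𝔩(v+w) ≥ 𝔩(v) + 𝔩(w), and positively homogeneous of degree one. -/

import Mathlib

open Filter Topology

theorem stmt_16 (V : Type*) [NormedAddCommGroup V] [NormedSpace ℝ V]
    [FiniteDimensional ℝ V] (T : Set V) (hclosed : IsClosed T) (hconv : Convex ℝ T)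
    (hcone : ∀ (c : ℝ), 0 ≤ c → ∀ v ∈ T, c • v ∈ T)
    (d : V → V → ℝ) (hdnonneg : ∀ x y : V, 0 ≤ d x y)
    (hrev : ∀ x y z : V, y - x ∈ T → z - y ∈ T → d x y + d y z ≤ d x z)
    (M : ℝ) (hquasi : ∀ x x' : V, ∀ v ∈ T, |d x (x + v) - d x' (x' + v)| ≤ M)
    (l : V → ℝ)
    (hlim : ∀ x : V, ∀ v ∈ T,
      Filter.Tendsto (fun n : ℕ => d x (x + (n : ℝ) • v) / n) Filter.atTop (nhds (l v))) :
    (∀ v ∈ T, ∀ w ∈ T, l v + l w ≤ l (v + w)) ∧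
      (∀ (c : ℝ), 0 ≤ c → ∀ v ∈ T, l (c • v) = c * l v) := by
  -- limits with base point 0, simplified
  have hlim0 : ∀ v ∈ T, Tendsto (fun n : ℕ => d 0 ((n : ℝ) • v) / n) atTop (𝓝 (l v)) := by
    intro v hv
    have := hlim 0 v hv
    simpa using this
  -- monotonicity of t ↦ d 0 (t • v)
  have hmono : ∀ v ∈ T, ∀ s t : ℝ, 0 ≤ s → s ≤ t →
      d 0 (s • v) ≤ d 0 (t • v) := by
    intro v hv s t hs hst
    have h1 : s • v - (0 : V) ∈ T := by simpa using hcone s hs v hv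
    have h2 : t • v - s • v ∈ T := by
      have h : t • v - s • v = (t - s) • v := by rw [sub_smul]
      rw [h]; exact hcone _ (by linarith) v hv
    have := hrev 0 (s • v) (t • v) h1 h2
    nlinarith [hdnonneg (s • v) (t • v)]
  have hTadd : ∀ v ∈ T, ∀ w ∈ T, v + w ∈ T := by
    intro v hv w hw
    have h := hconv hv hw (by norm_num : (0:ℝ) ≤ 1/2) (by norm_num : (0:ℝ) ≤ 1/2)
      (by norm_num)
    have h2 := hcone 2 (by norm_num) _ h
    have h3 : (2 : ℝ) • ((1/2 : ℝ) • v + (1/2 : ℝ) • w) = v + w := by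
      rw [smul_add, smul_smul, smul_smul]; norm_num
    rwa [h3] at h2
  constructor
  · -- superadditivity
    intro v hv w hw
    have hvw : v + w ∈ T := hTadd v hv w hw
    have hM : Tendsto (fun n : ℕ => M / n) atTop (𝓝 0) :=
      tendsto_const_div_atTop_nhds_zero_nat M
    have hleft : Tendsto (fun n : ℕ =>
        d 0 ((n : ℝ) • v) / n + (d 0 ((n : ℝ) • w) / n - M / n))
        atTop (𝓝 (l v + (l w - 0))) := (hlim0 v hv).add ((hlim0 w hw).sub hM)
    have key : ∀ᶠ n : ℕ in atTop,
        d 0 ((n : ℝ) • v) / n + (d 0 ((n : ℝ) • w) / n - M / n)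
          ≤ d 0 ((n : ℝ) • (v + w)) / n := by
      filter_upwards [Filter.eventually_ge_atTop 1] with n hn
      have hn' : (0 : ℝ) < n := by exact_mod_cast hn
      have hnv : (n : ℝ) • v - (0 : V) ∈ T := by
        simpa using hcone n (by positivity) v hv
      have hnw : (n : ℝ) • (v + w) - (n : ℝ) • v ∈ T := by
        have h : (n : ℝ) • (v + w) - (n : ℝ) • v = (n : ℝ) • w := by
          rw [smul_add]; abel
        rw [h]; exact hcone n (by positivity) w hw
      have h1 := hrev 0 ((n : ℝ) • v) ((n : ℝ) • (v + w)) hnv hnw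
      have h2 := hquasi ((n : ℝ) • v) 0 ((n : ℝ) • w)
        (hcone n (by positivity) w hw)
      rw [abs_le] at h2
      have h3 : (n : ℝ) • v + (n : ℝ) • w = (n : ℝ) • (v + w) := (smul_add _ _ _).symm
      rw [h3, zero_add] at h2
      have hineq : d 0 ((n : ℝ) • v) + (d 0 ((n : ℝ) • w) - M)
          ≤ d 0 ((n : ℝ) • (v + w)) := by linarith [h2.1, h2.2]
      have heq : d 0 ((n : ℝ) • v) / n + (d 0 ((n : ℝ) • w) / n - M / n)
          = (d 0 ((n : ℝ) • v) + (d 0 ((n : ℝ) • w) - M)) / n := by ring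
      rw [heq]
      gcongr
    have := le_of_tendsto_of_tendsto hleft (hlim0 (v + w) hvw) key
    linarith
  · -- homogeneity
    intro c hc v hv
    have h0T : (0 : V) ∈ T := by simpa using hcone 0 le_rfl v hv
    have hd00 : d 0 (0 : V) = 0 := by
      have := hrev 0 0 0 (by simpa using h0T) (by simpa using h0T)
      have := hdnonneg 0 (0 : V)
      linarith
    rcases eq_or_lt_of_le hc with rfl | hcpos
    · -- c = 0
      have hcv : Tendsto (fun n : ℕ => d 0 ((n : ℝ) • ((0:ℝ) • v)) / n) atTop
          (𝓝 (l ((0:ℝ) • v))) := hlim0 _ (hcone 0 le_rfl v hv)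
      have hconst : Tendsto (fun n : ℕ => d 0 ((n : ℝ) • ((0:ℝ) • v)) / n) atTop
          (𝓝 0) := by
        have : (fun n : ℕ => d 0 ((n : ℝ) • ((0:ℝ) • v)) / n) = fun _ => 0 := by
          funext n; simp [hd00]
        rw [this]; exact tendsto_const_nhds
      rw [tendsto_nhds_unique hcv hconst]; ring
    · -- c > 0
      have hcv : c • v ∈ T := hcone c hc v hv
      -- g m = d 0 (m • v) / m tends to l v
      have hg := hlim0 v hv
      have hnc : Tendsto (fun n : ℕ => (n : ℝ) * c) atTop atTop :=
        Tendsto.atTop_mul_const hcpos tendsto_natCast_atTop_atTop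
      -- ceiling sequence
      have hkceil : Tendsto (fun n : ℕ => ⌈(n : ℝ) * c⌉₊) atTop atTop :=
        tendsto_nat_ceil_atTop.comp hnc
      have hkfloor : Tendsto (fun n : ℕ => ⌊(n : ℝ) * c⌋₊) atTop atTop :=
        tendsto_nat_floor_atTop.comp hnc
      -- ratios tend to c
      have hratio_ceil : Tendsto (fun n : ℕ => (⌈(n : ℝ) * c⌉₊ : ℝ) / n) atTop (𝓝 c) := by
        have h1 : Tendsto (fun n : ℕ => ((⌈(n : ℝ) * c⌉₊ : ℝ) / ((n : ℝ) * c)) * c)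
            atTop (𝓝 (1 * c)) :=
          ((tendsto_nat_ceil_div_atTop.comp hnc).mul_const c)
        rw [one_mul] at h1
        apply h1.congr'
        filter_upwards [Filter.eventually_ge_atTop 1] with n hn
        have hn' : (0 : ℝ) < n := by exact_mod_cast hn
        field_simp
      have hratio_floor : Tendsto (fun n : ℕ => (⌊(n : ℝ) * c⌋₊ : ℝ) / n) atTop (𝓝 c) := by
        have h1 : Tendsto (fun n : ℕ => ((⌊(n : ℝ) * c⌋₊ : ℝ) / ((n : ℝ) * c)) * c)
            atTop (𝓝 (1 * c)) :=
          ((tendsto_nat_floor_div_atTop.comp hnc).mul_const c)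
        rw [one_mul] at h1
        apply h1.congr'
        filter_upwards [Filter.eventually_ge_atTop 1] with n hn
        have hn' : (0 : ℝ) < n := by exact_mod_cast hn
        field_simp
      -- upper sequence tends to l v * c
      have hupper : Tendsto (fun n : ℕ => d 0 ((⌈(n : ℝ) * c⌉₊ : ℝ) • v) / n) atTop
          (𝓝 (l v * c)) := by
        have hcomp : Tendsto (fun n : ℕ =>
            d 0 ((⌈(n : ℝ) * c⌉₊ : ℝ) • v) / (⌈(n : ℝ) * c⌉₊ : ℝ)) atTop (𝓝 (l v)) :=
          hg.comp hkceil
        have hmul := hcomp.mul hratio_ceil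
        apply hmul.congr'
        filter_upwards [hkceil.eventually_ge_atTop 1] with n hn
        have hn' : (0 : ℝ) < (⌈(n : ℝ) * c⌉₊ : ℝ) := by exact_mod_cast hn
        field_simp
      -- lower sequence tends to l v * c
      have hlower : Tendsto (fun n : ℕ => d 0 ((⌊(n : ℝ) * c⌋₊ : ℝ) • v) / n) atTop
          (𝓝 (l v * c)) := by
        have hcomp : Tendsto (fun n : ℕ =>
            d 0 ((⌊(n : ℝ) * c⌋₊ : ℝ) • v) / (⌊(n : ℝ) * c⌋₊ : ℝ)) atTop (𝓝 (l v)) :=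
          hg.comp hkfloor
        have hmul := hcomp.mul hratio_floor
        apply hmul.congr'
        filter_upwards [hkfloor.eventually_ge_atTop 1] with n hn
        have hn' : (0 : ℝ) < (⌊(n : ℝ) * c⌋₊ : ℝ) := by exact_mod_cast hn
        field_simp
      -- the middle sequence
      have hmid : Tendsto (fun n : ℕ => d 0 (((n : ℝ) * c) • v) / n) atTop
          (𝓝 (l (c • v))) := by
        have := hlim0 (c • v) hcv
        apply this.congr
        intro n
        rw [smul_smul]
      have hsq : Tendsto (fun n : ℕ => d 0 (((n : ℝ) * c) • v) / n) atTop
          (𝓝 (l v * c)) := by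
        apply tendsto_of_tendsto_of_tendsto_of_le_of_le' hlower hupper
        · filter_upwards with n
          have h1 : (0 : ℝ) ≤ (⌊(n : ℝ) * c⌋₊ : ℝ) := by positivity
          have h2 : (⌊(n : ℝ) * c⌋₊ : ℝ) ≤ (n : ℝ) * c :=
            Nat.floor_le (by positivity)
          have := hmono v hv _ _ h1 h2
          gcongr
        · filter_upwards with n
          have h1 : (0 : ℝ) ≤ (n : ℝ) * c := by positivity
          have h2 : (n : ℝ) * c ≤ (⌈(n : ℝ) * c⌉₊ : ℝ) := Nat.le_ceil _
          have := hmono v hv _ _ h1 h2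
          gcongr
      have := tendsto_nhds_unique hmid hsq
      rw [this]; ring
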